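/- Let λ ∈ ℝ with λ ≠ 0, let τ(s) = (cos s, sin s, 0), and let σ : ℝ → ℝ³ satisfy σ'' = -λ τ with ⟨σ', σ'⟩ constant. Then there exist constants c₂, c₄, c₅, c₆ such that σ(s) = (c₂ + λ cos s, c₄ + λ sin s, c₅ s + c₆). -/

import Mathlib

open Matrix

lemma eq_of_hasDerivAt_eq' {f g : ℝ → ℝ} (d : ℝ → ℝ)
    (hf : ∀ s, HasDerivAt f (d s) s) (hg : ∀ s, HasDerivAt g (d s) s)
    (h0 : f 0 = g 0) : ∀ s, f s = g s := by
  intro s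
  have h : ∀ x : ℝ, HasDerivAt (fun t => f t - g t) 0 x := fun x => by
    have := (hf x).sub (hg x); rw [sub_self] at this; exact this
  have hc := is_const_of_deriv_eq_zero (f := fun t => f t - g t)
    (fun x => (h x).differentiableAt) (fun x => (h x).deriv) s 0
  linarith

theorem stmt_5 (lam : ℝ) (hlam : lam ≠ 0) (σ : ℝ → (Fin 3 → ℝ))
    (hσ : ContDiff ℝ 2 σ)
    (hODE : ∀ s, deriv (deriv σ) s = (-lam) • ![Real.cos s, Real.sin s, 0])
    (hconst : ∀ s t : ℝ, deriv σ s ⬝ᵥ deriv σ s = deriv σ t ⬝ᵥ deriv σ t) :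
    ∃ c₂ c₄ c₅ c₆ : ℝ, ∀ s,
      σ s = ![c₂ + lam * Real.cos s, c₄ + lam * Real.sin s, c₅ * s + c₆] := by
  have hd1 : Differentiable ℝ σ := hσ.differentiable (by norm_num)
  have hd2 : Differentiable ℝ (deriv σ) := by
    have hσ' : ContDiff ℝ ((1 : ℕ∞) + 1) σ := by
      convert hσ using 2; norm_num
    have := (contDiff_succ_iff_deriv.mp hσ').2
    exact this.2.differentiable (by norm_num)
  have hu : ∀ (i : Fin 3) (s : ℝ), HasDerivAt (fun t => σ t i) (deriv σ s i) s :=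
    fun i s => hasDerivAt_pi.mp (hd1 s).hasDerivAt i
  have hu' : ∀ (i : Fin 3) (s : ℝ),
      HasDerivAt (fun t => deriv σ t i) (deriv (deriv σ) s i) s :=
    fun i s => hasDerivAt_pi.mp (hd2 s).hasDerivAt i
  set a := deriv σ 0 0 with ha
  set b := deriv σ 0 1 with hb
  set e := deriv σ 0 2 with he
  -- first derivatives
  have hA : ∀ s, deriv σ s 0 = -lam * Real.sin s + a := by
    apply eq_of_hasDerivAt_eq' (fun s => -lam * Real.cos s)
    · intro s
      have := hu' 0 s
      have hv : deriv (deriv σ) s 0 = -lam * Real.cos s := by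
        rw [hODE s]; simp
      rwa [hv] at this
    · intro s
      exact ((Real.hasDerivAt_sin s).const_mul (-lam)).add_const a
    · simp [ha]
  have hB : ∀ s, deriv σ s 1 = lam * Real.cos s + (b - lam) := by
    apply eq_of_hasDerivAt_eq' (fun s => -lam * Real.sin s)
    · intro s
      have := hu' 1 s
      have hv : deriv (deriv σ) s 1 = -lam * Real.sin s := by
        rw [hODE s]; simp
      rwa [hv] at this
    · intro s
      have := ((Real.hasDerivAt_cos s).const_mul lam).add_const (b - lam)
      refine this.congr_deriv ?_; ring
    · simp [hb]
  have hC : ∀ s, deriv σ s 2 = e := by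
    apply eq_of_hasDerivAt_eq' (fun _ => (0 : ℝ))
    · intro s
      have := hu' 2 s
      have hv : deriv (deriv σ) s 2 = 0 := by
        rw [hODE s]; simp
      rwa [hv] at this
    · intro s; exact hasDerivAt_const s e
    · rfl
  -- use constancy of speed to show a = 0 and b = lam
  have key : ∀ s t : ℝ,
      (-lam * Real.sin s + a)^2 + (lam * Real.cos s + (b - lam))^2 + e^2 =
      (-lam * Real.sin t + a)^2 + (lam * Real.cos t + (b - lam))^2 + e^2 := by
    intro s t
    have := hconst s t
    simp only [dotProduct, Fin.sum_univ_three] at this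
    rw [hA, hB, hC, hA, hB, hC] at this
    ring_nf at this ⊢
    linarith
  have ha0 : a = 0 := by
    have h1 := key (Real.pi / 2) (-(Real.pi / 2))
    simp [Real.sin_pi_div_two, Real.cos_pi_div_two] at h1
    have : a * lam = 0 := by nlinarith
    rcases mul_eq_zero.mp this with h | h
    · exact h
    · exact absurd h hlam
  have hb0 : b = lam := by
    have h1 := key 0 Real.pi
    simp [Real.sin_pi, Real.cos_pi] at h1
    have : (b - lam) * lam = 0 := by nlinarith
    rcases mul_eq_zero.mp this with h | h
    · linarith
    · exact absurd h hlam
  -- integrate once more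
  refine ⟨σ 0 0 - lam, σ 0 1, e, σ 0 2, fun s => ?_⟩
  have h0 : ∀ s, σ s 0 = (σ 0 0 - lam) + lam * Real.cos s := by
    apply eq_of_hasDerivAt_eq' (fun s => -lam * Real.sin s + a)
    · exact fun s => (hA s) ▸ hu 0 s
    · intro s
      have := (((Real.hasDerivAt_cos s).const_mul lam).const_add (σ 0 0 - lam))
      refine this.congr_deriv ?_
      rw [ha0]; ring
    · simp
  have h1 : ∀ s, σ s 1 = σ 0 1 + lam * Real.sin s := by
    apply eq_of_hasDerivAt_eq' (fun s => lam * Real.cos s + (b - lam))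
    · exact fun s => (hB s) ▸ hu 1 s
    · intro s
      have := (((Real.hasDerivAt_sin s).const_mul lam).const_add (σ 0 1))
      refine this.congr_deriv ?_
      rw [hb0]; ring
    · simp
  have h2' : ∀ s, σ s 2 = e * s + σ 0 2 := by
    apply eq_of_hasDerivAt_eq' (fun _ => e)
    · exact fun s => (hC s) ▸ hu 2 s
    · intro s
      have := ((hasDerivAt_id s).const_mul e).add_const (σ 0 2)
      simpa using this
    · simp
  funext i
  fin_cases i
  · simpa using h0 s
  · simpa using h1 s
  · simpa using h2' s
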